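/- If (k+1)·f^{−1/(k+a)} δ_{ij} + (k+a)·∇_i∇_j(f^{−1/(k+a)}) is positive definite on S^{n−1} (with smallest eigenvalue ≥ λ > 0), f is smooth and positive, and −a ≤ s φ′(s)/φ(s) ≤ −1 for all s > 0, then along any direction τ one has (k − φ′h/φ) − (f^{−1})_τ² f² · (k − φ′h/φ − 1)/(k − φ′h/φ) + (f^{−1})_{ττ} f ≥ k + 1 + (k+a) f^{1/(k+a)} (f^{−1/(k+a)})_{ττ} = f^{1/(k+a)}[(k+1) f^{−1/(k+a)} + (k+a)(f^{−1/(k+a)})_{ττ}] ≥ c_f > 0, where c_f depends only on f, a, k and λ. -/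

import Mathlib

/-- the convexity condition on `f` gives a uniform positive lower
bound in the curvature estimate. Along a unit-speed great circle parametrized by
`τ` (subscripts denote derivatives in `τ`), suppose `f > 0` is smooth with
`f ≥ f_min > 0`, that the positivity condition
`(k+1) f^{−1/(k+a)} + (k+a)(f^{−1/(k+a)})_{ττ} ≥ λ > 0` holds, and that
`r := φ′h/φ ∈ [−a, −1]` with `a ≥ 1`, `k ≥ 1`. Then
`(k − r) − (f⁻¹)_τ² f² (k − r − 1)/(k − r) + (f⁻¹)_{ττ} f
  ≥ k + 1 + (k+a) f^{1/(k+a)} (f^{−1/(k+a)})_{ττ}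
  = f^{1/(k+a)}·[(k+1) f^{−1/(k+a)} + (k+a)(f^{−1/(k+a)})_{ττ}]
  ≥ c_f := f_min^{1/(k+a)}·λ > 0`. -/
theorem convexity_condition_lower_bound (k : ℕ) (hk : 1 ≤ k) (a : ℝ) (ha : 1 ≤ a)
    (f : ℝ → ℝ) (hfsm : ContDiff ℝ 2 f)
    (fmin : ℝ) (hfmin : 0 < fmin) (hf : ∀ τ, fmin ≤ f τ)
    (lam : ℝ) (hlam : 0 < lam)
    (hconv : ∀ τ : ℝ, lam ≤ ((k : ℝ) + 1) * (f τ) ^ (-(1 / ((k : ℝ) + a)))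
      + ((k : ℝ) + a) * deriv (deriv (fun s => (f s) ^ (-(1 / ((k : ℝ) + a))))) τ)
    (r : ℝ) (hr₁ : -a ≤ r) (hr₂ : r ≤ -1)
    (τ₀ : ℝ) :
    (((k : ℝ) - r)
        - (deriv (fun s => (f s)⁻¹) τ₀) ^ 2 * (f τ₀) ^ 2 *
            (((k : ℝ) - r - 1) / ((k : ℝ) - r))
        + deriv (deriv (fun s => (f s)⁻¹)) τ₀ * f τ₀
      ≥ (k : ℝ) + 1 + ((k : ℝ) + a) * (f τ₀) ^ (1 / ((k : ℝ) + a)) *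
          deriv (deriv (fun s => (f s) ^ (-(1 / ((k : ℝ) + a))))) τ₀) ∧
    ((k : ℝ) + 1 + ((k : ℝ) + a) * (f τ₀) ^ (1 / ((k : ℝ) + a)) *
          deriv (deriv (fun s => (f s) ^ (-(1 / ((k : ℝ) + a))))) τ₀
      = (f τ₀) ^ (1 / ((k : ℝ) + a)) *
          (((k : ℝ) + 1) * (f τ₀) ^ (-(1 / ((k : ℝ) + a)))
            + ((k : ℝ) + a) * deriv (deriv (fun s => (f s) ^ (-(1 / ((k : ℝ) + a))))) τ₀)) ∧
    ((f τ₀) ^ (1 / ((k : ℝ) + a)) *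
          (((k : ℝ) + 1) * (f τ₀) ^ (-(1 / ((k : ℝ) + a)))
            + ((k : ℝ) + a) * deriv (deriv (fun s => (f s) ^ (-(1 / ((k : ℝ) + a))))) τ₀)
      ≥ fmin ^ (1 / ((k : ℝ) + a)) * lam) ∧
    0 < fmin ^ (1 / ((k : ℝ) + a)) * lam := by

  have hka : (0:ℝ) < (k:ℝ) + a := by
    have : (1:ℝ) ≤ (k:ℝ) := by exact_mod_cast hk
    linarith
  have hkane : ((k:ℝ) + a) ≠ 0 := hka.ne'
  set p : ℝ := 1 / ((k : ℝ) + a) with hp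
  have hppos : 0 < p := by positivity
  have hFpos : ∀ s, 0 < f s := fun s => lt_of_lt_of_le hfmin (hf s)
  have hF : 0 < f τ₀ := hFpos τ₀
  have hd1 : Differentiable ℝ f := hfsm.differentiable two_ne_zero
  have hd2 : Differentiable ℝ (deriv f) := by
    have : ContDiff ℝ ((1:ℕ∞)+1) f := by exact_mod_cast hfsm
    exact ((contDiff_succ_iff_deriv.mp this).2.2).differentiable (by simp)
  set F := f τ₀ with hFdef
  set F' := deriv f τ₀ with hF'def
  set F'' := deriv (deriv f) τ₀ with hF''def
  have hderiv_inv : deriv (fun s => (f s)⁻¹) = fun s => -(deriv f s) / (f s)^2 :=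
    funext fun s => ((hd1 s).hasDerivAt.inv (hFpos s).ne').deriv
  have hderiv_g : deriv (fun s => (f s) ^ (-p)) = fun s => deriv f s * (-p) * (f s) ^ (-p - 1) :=
    funext fun s => ((hd1 s).hasDerivAt.rpow_const (Or.inl (hFpos s).ne')).deriv
  have hD2inv : deriv (deriv (fun s => (f s)⁻¹)) τ₀
      = ((-F'') * F^2 - (-F') * ((2:ℕ) * F^1 * F')) / (F^2)^2 := by
    rw [hderiv_inv]
    have h1 : HasDerivAt (fun s => -(deriv f s)) (-F'') τ₀ := ((hd2 τ₀).hasDerivAt).neg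
    have h2 : HasDerivAt (fun s => (f s)^2) ((2:ℕ) * F^1 * F') τ₀ := (hd1 τ₀).hasDerivAt.pow 2
    exact (h1.div h2 (by positivity)).deriv
  have hD2g : deriv (deriv (fun s => (f s) ^ (-p))) τ₀
      = F'' * (-p) * F ^ (-p - 1) + (F' * (-p)) * (F' * (-p - 1) * F ^ (-p - 1 - 1)) := by
    rw [hderiv_g]
    have h1 : HasDerivAt (fun s => deriv f s * (-p)) (F'' * (-p)) τ₀ :=
      ((hd2 τ₀).hasDerivAt).mul_const _
    have h2 : HasDerivAt (fun s => (f s) ^ (-p - 1)) (F' * (-p - 1) * F ^ (-p - 1 - 1)) τ₀ :=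
      (hd1 τ₀).hasDerivAt.rpow_const (Or.inl hF.ne')
    have h3 := (h1.mul h2).deriv
    exact h3
  have e0 : F ^ p * F ^ (-p) = 1 := by
    rw [← Real.rpow_add hF]; simp
  have e1 : F ^ p * F ^ (-p - 1) = F⁻¹ := by
    rw [← Real.rpow_add hF, show p + (-p - 1) = (-1:ℝ) by ring, Real.rpow_neg_one]
  have e2 : F ^ p * F ^ (-p - 1 - 1) = (F^2)⁻¹ := by
    rw [← Real.rpow_add hF, show p + (-p - 1 - 1) = -((2:ℕ):ℝ) by push_cast; ring,
      Real.rpow_neg hF.le, Real.rpow_natCast]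
  have hkp : ((k:ℝ) + a) * p = 1 := by
    rw [hp]; field_simp
  have key1 : ((k:ℝ) + a) * F ^ p * deriv (deriv (fun s => (f s) ^ (-p))) τ₀
      = -(F''/F) + (1 + p) * (F'^2/F^2) := by
    rw [hD2g]
    linear_combination (-(((k:ℝ)+a)*p*F'')) * e1 + (((k:ℝ)+a)*p*(p+1)*F'^2) * e2
      + (-F''*F⁻¹ + (p+1)*F'^2*(F^2)⁻¹) * hkp
  have hu1 : deriv (fun s => (f s)⁻¹) τ₀ = -F' / F^2 := by rw [hderiv_inv]
  have hu2 : deriv (deriv (fun s => (f s)⁻¹)) τ₀ * F = -(F''/F) + 2 * (F'^2/F^2) := by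
    rw [hD2inv]
    field_simp
    ring
  set m : ℝ := (k:ℝ) - r with hm
  have hm1 : (k:ℝ) + 1 ≤ m := by rw [hm]; linarith
  have hm2 : m ≤ (k:ℝ) + a := by rw [hm]; linarith
  have hm0 : 0 < m := by
    have : (1:ℝ) ≤ (k:ℝ) := by exact_mod_cast hk
    linarith
  have hpm : p ≤ 1/m := by
    rw [hp]
    exact one_div_le_one_div_of_le hm0 hm2
  refine ⟨?_, ?_, ?_, by positivity⟩
  · -- part 1
    rw [ge_iff_le, ← sub_nonneg, hu2, key1]
    have hA : (deriv (fun s => (f s)⁻¹) τ₀) ^ 2 * F ^ 2 = F'^2 / F^2 := by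
      rw [hu1]; field_simp
    rw [hA]
    have hq : (m - 1)/m = 1 - 1/m := by field_simp
    rw [hq]
    have hX : (0:ℝ) ≤ F'^2 / F^2 := by positivity
    nlinarith [mul_nonneg hX (sub_nonneg.2 hpm)]
  · -- part 2
    linear_combination (-(((k:ℝ)+1))) * e0
  · -- part 3
    exact mul_le_mul (Real.rpow_le_rpow hfmin.le (hf τ₀) hppos.le) (hconv τ₀) hlam.le
      (Real.rpow_nonneg hF.le p)
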